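/- Consider signed distributions μ : ({−1,1})⁴ → ℝ on outcomes (a, b, a′, b′) with Σ μ = 1 whose four pairwise marginals onto the contexts (a,a′), (a,b′), (b,a′), (b,b′) equal the Popescu–Rohrlich box tables: for (a,a′), (a,b′) and (b,a′): equal outcomes have probability 1/2 each and unequal outcomes probability 0; for (b,b′): unequal outcomes have probability 1/2 each and equal outcomes probability 0. Then the minimum of Σ_{ω ∈ ({−1,1})⁴} |μ(ω)| over all such μ equals 2 (equivalently, the contextuality of the PR box equals 1, its maximal possible value). -/
import Mathlib


/-- The two-point outcome set `{-1, 1}`. -/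
abbrev PM : Type := ({-1, 1} : Finset ℤ)

def pm1 : PM := ⟨-1, by decide⟩
def pm2 : PM := ⟨1, by decide⟩

lemma PM.cases (x : PM) : x = pm1 ∨ x = pm2 := by
  rcases x with ⟨v, hv⟩
  simp only [Finset.mem_insert, Finset.mem_singleton] at hv
  rcases hv with h | h <;> [left; right] <;> simp [pm1, pm2, h]

lemma PM.sum (f : PM → ℝ) : ∑ x : PM, f x = f pm1 + f pm2 := by
  have : (Finset.univ : Finset PM) = {pm1, pm2} := by decide
  rw [this, Finset.sum_pair (by decide)]

/-- Witness quasiprobability for the PR box with total variation 2. -/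
noncomputable def prw (a b a' b' : ℤ) : ℝ :=
  if a = -1 ∧ b = -1 ∧ a' = -1 ∧ b' = 1 then 1/2
  else if a = -1 ∧ b = 1 ∧ a' = -1 ∧ b' = -1 then 1/2
  else if a = -1 ∧ b = 1 ∧ a' = -1 ∧ b' = 1 then -(1/2)
  else if a = 1 ∧ b = 1 ∧ a' = 1 ∧ b' = 1 then 1/2
  else 0

/-- For the Popescu–Rohrlich box (contexts `(a,a')`, `(a,b')`, `(b,a')` with equal
outcomes of probability `1/2` each and unequal outcomes of probability `0`, and context
`(b,b')` with unequal outcomes of probability `1/2` each and equal outcomes `0`), the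
minimum of `∑ |μ(ω)|` over all signed distributions `μ` on `({-1,1})⁴` with `∑ μ = 1`
reproducing these pairwise marginals equals `2`, i.e. the contextuality of the PR box
is `1`, the maximal possible value. -/
theorem stmt_10 :
    IsLeast {s : ℝ | ∃ μ : PM → PM → PM → PM → ℝ,
        (∑ a : PM, ∑ b : PM, ∑ a' : PM, ∑ b' : PM, μ a b a' b' = 1) ∧
        (∀ a a' : PM, ∑ b : PM, ∑ b' : PM, μ a b a' b'
            = if a = a' then 1/2 else 0) ∧
        (∀ a b' : PM, ∑ b : PM, ∑ a' : PM, μ a b a' b'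
            = if a = b' then 1/2 else 0) ∧
        (∀ b a' : PM, ∑ a : PM, ∑ b' : PM, μ a b a' b'
            = if b = a' then 1/2 else 0) ∧
        (∀ b b' : PM, ∑ a : PM, ∑ a' : PM, μ a b a' b'
            = if b = b' then 0 else 1/2) ∧
        s = ∑ a : PM, ∑ b : PM, ∑ a' : PM, ∑ b' : PM, |μ a b a' b'|}
      2 := by
  constructor
  · -- membership: witness
    refine ⟨fun a b a' b' => prw a.1 b.1 a'.1 b'.1, ?_, ?_, ?_, ?_, ?_, ?_⟩
    · simp only [PM.sum]; norm_num [prw, pm1, pm2]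
    · intro a a'
      rcases PM.cases a with rfl | rfl <;> rcases PM.cases a' with rfl | rfl <;>
        simp only [PM.sum] <;> norm_num [prw, pm1, pm2]
    · intro a b'
      rcases PM.cases a with rfl | rfl <;> rcases PM.cases b' with rfl | rfl <;>
        simp only [PM.sum] <;> norm_num [prw, pm1, pm2]
    · intro b a'
      rcases PM.cases b with rfl | rfl <;> rcases PM.cases a' with rfl | rfl <;>
        simp only [PM.sum] <;> norm_num [prw, pm1, pm2]
    · intro b b'
      rcases PM.cases b with rfl | rfl <;> rcases PM.cases b' with rfl | rfl <;>
        simp only [PM.sum] <;> norm_num [prw, pm1, pm2]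
    · have h : |(1:ℝ)/2| = 1/2 := abs_of_nonneg (by norm_num)
      simp only [PM.sum]; norm_num [prw, pm1, pm2, h]
  · -- lower bound
    rintro s ⟨μ, -, h1, h2, h3, h4, rfl⟩
    simp only [PM.sum] at h1 h2 h3 h4 ⊢
    have A1 := h1 pm1 pm1; have A2 := h1 pm1 pm2
    have A3 := h1 pm2 pm1; have A4 := h1 pm2 pm2
    have B1 := h2 pm1 pm1; have B2 := h2 pm1 pm2
    have B3 := h2 pm2 pm1; have B4 := h2 pm2 pm2
    have C1 := h3 pm1 pm1; have C2 := h3 pm1 pm2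
    have C3 := h3 pm2 pm1; have C4 := h3 pm2 pm2
    have D1 := h4 pm1 pm1; have D2 := h4 pm1 pm2
    have D3 := h4 pm2 pm1; have D4 := h4 pm2 pm2
    have hne : pm1 ≠ pm2 := by decide
    have hne' : pm2 ≠ pm1 := by decide
    simp only [hne, hne', eq_self_iff_true, if_true, if_false]
      at A1 A2 A3 A4 B1 B2 B3 B4 C1 C2 C3 C4 D1 D2 D3 D4
    have L : ∀ x : ℝ, x ≤ |x| ∧ -x ≤ |x| := fun x => ⟨le_abs_self x, neg_le_abs x⟩
    obtain ⟨p01, q01⟩ := L (μ pm1 pm1 pm1 pm1); obtain ⟨p02, q02⟩ := L (μ pm1 pm1 pm1 pm2)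
    obtain ⟨p03, q03⟩ := L (μ pm1 pm1 pm2 pm1); obtain ⟨p04, q04⟩ := L (μ pm1 pm1 pm2 pm2)
    obtain ⟨p05, q05⟩ := L (μ pm1 pm2 pm1 pm1); obtain ⟨p06, q06⟩ := L (μ pm1 pm2 pm1 pm2)
    obtain ⟨p07, q07⟩ := L (μ pm1 pm2 pm2 pm1); obtain ⟨p08, q08⟩ := L (μ pm1 pm2 pm2 pm2)
    obtain ⟨p09, q09⟩ := L (μ pm2 pm1 pm1 pm1); obtain ⟨p10, q10⟩ := L (μ pm2 pm1 pm1 pm2)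
    obtain ⟨p11, q11⟩ := L (μ pm2 pm1 pm2 pm1); obtain ⟨p12, q12⟩ := L (μ pm2 pm1 pm2 pm2)
    obtain ⟨p13, q13⟩ := L (μ pm2 pm2 pm1 pm1); obtain ⟨p14, q14⟩ := L (μ pm2 pm2 pm1 pm2)
    obtain ⟨p15, q15⟩ := L (μ pm2 pm2 pm2 pm1); obtain ⟨p16, q16⟩ := L (μ pm2 pm2 pm2 pm2)
    linarith
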